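/- Let K be a field with r_i, s_i ∈ K× satisfying r_i^2 ≠ s_i^2 for each i, λ = (λ_1,…,λ_n) ∈ (K×)^n, and signs ζ_i, ζ_i' ∈ {±1}. On the vector space V with basis {v(k) : k ∈ ℕ^n}, define ρ_i v(k) = r_i^{k_i} λ_i ζ_i v(k), σ_i v(k) = s_i^{k_i} λ_i ζ_i' v(k), x_i v(k) = v(k+ε_i), y_i v(k) = [k_i]_i λ_i^2 v(k−ε_i) (with v(ℓ)=0 if ℓ ∉ ℕ^n). Then these operators satisfy the defining relations (R1)–(R5) of A_{r,s}(n), making V(λ,ζ) an A_{r,s}(n)-module (a Verma module). -/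

import Mathlib

/-- Build a linear operator on `ι →₀ K` from its values on the basis. -/
noncomputable def mkOp {K : Type*} [Field K] {ι : Type*} (f : ι → (ι →₀ K)) :
    (ι →₀ K) →ₗ[K] (ι →₀ K) :=
  Finsupp.lsum K fun k => LinearMap.toSpanSingleton K (ι →₀ K) (f k)

/-- The quantum-type integer `[m] = (r^{2m} - s^{2m})/(r² - s²)`. -/
noncomputable def qint {K : Type*} [Field K] (r s : K) (m : ℕ) : K :=
  (r ^ (2 * m) - s ^ (2 * m)) / (r ^ 2 - s ^ 2)

section ops
variable {K : Type*} [Field K] {n : ℕ}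

/-- `ρ_i v(k) = r_i^{k_i} λ_i ζ_i v(k)` (and the analogous `σ_i` by substituting `s, ζ'`). -/
noncomputable def rhoVOp (r lam zeta : Fin n → K) (i : Fin n) :
    ((Fin n → ℕ) →₀ K) →ₗ[K] ((Fin n → ℕ) →₀ K) :=
  mkOp fun k => Finsupp.single k (r i ^ k i * lam i * zeta i)

/-- inverse of `rhoVOp`. -/
noncomputable def rhoVInvOp (r lam zeta : Fin n → K) (i : Fin n) :
    ((Fin n → ℕ) →₀ K) →ₗ[K] ((Fin n → ℕ) →₀ K) :=
  mkOp fun k => Finsupp.single k ((r i ^ k i * lam i * zeta i)⁻¹)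

/-- `x_i v(k) = v(k + ε_i)`. -/
noncomputable def xVOp (i : Fin n) :
    ((Fin n → ℕ) →₀ K) →ₗ[K] ((Fin n → ℕ) →₀ K) :=
  mkOp fun k => Finsupp.single (Function.update k i (k i + 1)) (1 : K)

/-- `y_i v(k) = [k_i]_i λ_i² v(k - ε_i)` (zero when `k_i = 0`, since `[0] = 0`). -/
noncomputable def yVOp (r s lam : Fin n → K) (i : Fin n) :
    ((Fin n → ℕ) →₀ K) →ₗ[K] ((Fin n → ℕ) →₀ K) :=
  mkOp fun k => (qint (r i) (s i) (k i) * lam i ^ 2) •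
    Finsupp.single (Function.update k i (k i - 1)) (1 : K)

end ops

section aux
variable {K : Type*} [Field K] {n : ℕ}

@[simp] lemma mkOp_single {ι : Type*} (f : ι → (ι →₀ K)) (a : ι) (b : K) :
    mkOp f (Finsupp.single a b) = b • f a := by
  simp [mkOp, LinearMap.toSpanSingleton_apply]

@[simp] lemma qint_zero (r s : K) : qint r s 0 = 0 := by simp [qint]

lemma qint_one {r s : K} (h : r ^ 2 ≠ s ^ 2) : qint r s 1 = 1 := by
  rw [qint, mul_one, div_self (sub_ne_zero.mpr h)]

lemma qint_succ_r {r s : K} (h : r ^ 2 ≠ s ^ 2) (m : ℕ) :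
    qint r s (m + 1) = r ^ 2 * qint r s m + s ^ (2 * m) := by
  have h' : r ^ 2 - s ^ 2 ≠ 0 := sub_ne_zero.mpr h
  simp only [qint]; field_simp; ring

lemma qint_succ_s {r s : K} (h : r ^ 2 ≠ s ^ 2) (m : ℕ) :
    qint r s (m + 1) = s ^ 2 * qint r s m + r ^ (2 * m) := by
  have h' : r ^ 2 - s ^ 2 ≠ 0 := sub_ne_zero.mpr h
  simp only [qint]; field_simp; ring

lemma aux_rho_comm (a b lam za zb : Fin n → K) (i j : Fin n) :
    rhoVOp (K := K) a lam za i ∘ₗ rhoVOp b lam zb j = rhoVOp b lam zb j ∘ₗ rhoVOp a lam za i := by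
  apply Finsupp.lhom_ext
  intro k c
  simp only [LinearMap.comp_apply, rhoVOp, mkOp_single, Finsupp.smul_single, smul_eq_mul]
  congr 1
  ring

lemma aux_rho_inv (a lam za : Fin n → K) (i : Fin n)
    (ha : a i ≠ 0) (hlam : lam i ≠ 0) (hz : za i ≠ 0) :
    rhoVOp (K := K) a lam za i ∘ₗ rhoVInvOp a lam za i = LinearMap.id ∧
    rhoVInvOp (K := K) a lam za i ∘ₗ rhoVOp a lam za i = LinearMap.id := by
  constructor <;>
  · apply Finsupp.lhom_ext
    intro k c
    simp only [LinearMap.comp_apply, rhoVOp, rhoVInvOp, mkOp_single, Finsupp.smul_single,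
      smul_eq_mul, LinearMap.id_apply]
    congr 1
    field_simp

lemma aux_rho_x (a lam za : Fin n → K) (i j : Fin n) :
    rhoVOp (K := K) a lam za i ∘ₗ xVOp j
      = (if i = j then a i else 1) • (xVOp j ∘ₗ rhoVOp a lam za i) := by
  apply Finsupp.lhom_ext
  intro k c
  simp only [LinearMap.comp_apply, LinearMap.smul_apply, rhoVOp, xVOp, mkOp_single,
    Finsupp.smul_single, smul_eq_mul]
  by_cases h : i = j
  · subst h
    simp only [if_pos rfl, Function.update_self, eq_self_iff_true, if_true]
    congr 1
    ring
  · simp only [if_neg h, Function.update_of_ne h]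
    congr 1
    ring

lemma aux_rho_y (r s a lam za : Fin n → K) (i j : Fin n) (ha : a i ≠ 0) :
    rhoVOp (K := K) a lam za i ∘ₗ yVOp r s lam j
      = (if i = j then a i else 1)⁻¹ • (yVOp r s lam j ∘ₗ rhoVOp a lam za i) := by
  apply Finsupp.lhom_ext
  intro k c
  simp only [LinearMap.comp_apply, LinearMap.smul_apply, rhoVOp, yVOp, mkOp_single,
    Finsupp.smul_single, smul_eq_mul, LinearMap.map_smul]
  by_cases h : i = j
  · subst h
    simp only [if_pos rfl, Function.update_self, eq_self_iff_true, if_true,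
      Finsupp.smul_single, smul_eq_mul]
    rcases Nat.eq_zero_or_pos (k i) with h0 | h0
    · simp [h0, qint]
    · obtain ⟨m, hm⟩ : ∃ m, k i = m + 1 := ⟨k i - 1, (Nat.succ_pred_eq_of_pos h0).symm⟩
      congr 1
      rw [hm]
      simp only [Nat.add_sub_cancel]
      field_simp
      ring
  · simp only [if_neg h, Function.update_of_ne h, inv_one, one_mul,
      Finsupp.smul_single, smul_eq_mul]
    congr 1
    ring

lemma aux_xx (i j : Fin n) : xVOp (K := K) (n := n) i ∘ₗ xVOp j = xVOp j ∘ₗ xVOp i := by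
  apply Finsupp.lhom_ext
  intro k c
  by_cases h : i = j
  · subst h; rfl
  · simp only [LinearMap.comp_apply, xVOp, mkOp_single, Finsupp.smul_single, smul_eq_mul,
      Function.update_of_ne h, Function.update_of_ne (Ne.symm h), Function.update_comm h]

lemma aux_yy (r s lam : Fin n → K) (i j : Fin n) :
    yVOp (K := K) r s lam i ∘ₗ yVOp r s lam j = yVOp r s lam j ∘ₗ yVOp r s lam i := by
  apply Finsupp.lhom_ext
  intro k c
  by_cases h : i = j
  · subst h; rfl
  · simp only [LinearMap.comp_apply, yVOp, mkOp_single, Finsupp.smul_single, smul_eq_mul,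
      LinearMap.map_smul, Function.update_of_ne h, Function.update_of_ne (Ne.symm h),
      Function.update_comm h, smul_smul]
    congr 1
    ring

lemma aux_yx (r s lam : Fin n → K) (i j : Fin n) (h : i ≠ j) :
    yVOp (K := K) r s lam i ∘ₗ xVOp j = xVOp j ∘ₗ yVOp r s lam i := by
  apply Finsupp.lhom_ext
  intro k c
  simp only [LinearMap.comp_apply, yVOp, xVOp, mkOp_single, Finsupp.smul_single, smul_eq_mul,
    LinearMap.map_smul, Function.update_of_ne h, Function.update_of_ne (Ne.symm h),
    Function.update_comm h, smul_smul, Finsupp.smul_single]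
  congr 1
  ring

lemma aux_R5r (r s lam zeta' : Fin n → K) (hrs : ∀ i, (r i) ^ 2 ≠ (s i) ^ 2)
    (hz : ∀ i, zeta' i = 1 ∨ zeta' i = -1) (i : Fin n) :
    yVOp r s lam i ∘ₗ xVOp i - (r i) ^ 2 • (xVOp i ∘ₗ yVOp r s lam i)
      = rhoVOp s lam zeta' i ∘ₗ rhoVOp s lam zeta' i := by
  apply Finsupp.lhom_ext
  intro k c
  have hz2 : zeta' i ^ 2 = 1 := by rcases hz i with h | h <;> simp [h]
  simp only [LinearMap.sub_apply, LinearMap.comp_apply, LinearMap.smul_apply, yVOp, xVOp,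
    rhoVOp, mkOp_single, Finsupp.smul_single, smul_eq_mul, LinearMap.map_smul,
    Function.update_self, smul_smul, Function.update_idem, Nat.add_sub_cancel,
    Function.update_eq_self]
  rcases Nat.eq_zero_or_pos (k i) with h0 | h0
  · simp only [h0, qint_zero, mul_zero, zero_mul, mul_one, Finsupp.single_zero, sub_zero,
      zero_add, qint_one (hrs i), pow_zero]
    congr 1
    linear_combination -c * lam i ^ 2 * hz2
  · obtain ⟨m, hm⟩ : ∃ m, k i = m + 1 := ⟨k i - 1, (Nat.succ_pred_eq_of_pos h0).symm⟩
    have h1 : k i - 1 + 1 = k i := Nat.succ_pred_eq_of_pos h0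
    rw [h1, Function.update_eq_self, ← Finsupp.single_sub]
    congr 1
    rw [hm, qint_succ_r (hrs i) (m + 1)]
    linear_combination (-c * lam i ^ 2 * s i ^ (2 * (m + 1))) * hz2

lemma aux_R5s (r s lam zeta : Fin n → K) (hrs : ∀ i, (r i) ^ 2 ≠ (s i) ^ 2)
    (hz : ∀ i, zeta i = 1 ∨ zeta i = -1) (i : Fin n) :
    yVOp r s lam i ∘ₗ xVOp i - (s i) ^ 2 • (xVOp i ∘ₗ yVOp r s lam i)
      = rhoVOp r lam zeta i ∘ₗ rhoVOp r lam zeta i := by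
  apply Finsupp.lhom_ext
  intro k c
  have hz2 : zeta i ^ 2 = 1 := by rcases hz i with h | h <;> simp [h]
  simp only [LinearMap.sub_apply, LinearMap.comp_apply, LinearMap.smul_apply, yVOp, xVOp,
    rhoVOp, mkOp_single, Finsupp.smul_single, smul_eq_mul, LinearMap.map_smul,
    Function.update_self, smul_smul, Function.update_idem, Nat.add_sub_cancel,
    Function.update_eq_self]
  rcases Nat.eq_zero_or_pos (k i) with h0 | h0
  · simp only [h0, qint_zero, mul_zero, zero_mul, mul_one, Finsupp.single_zero, sub_zero,
      zero_add, qint_one (hrs i), pow_zero]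
    congr 1
    linear_combination -c * lam i ^ 2 * hz2
  · obtain ⟨m, hm⟩ : ∃ m, k i = m + 1 := ⟨k i - 1, (Nat.succ_pred_eq_of_pos h0).symm⟩
    have h1 : k i - 1 + 1 = k i := Nat.succ_pred_eq_of_pos h0
    rw [h1, Function.update_eq_self, ← Finsupp.single_sub]
    congr 1
    rw [hm, qint_succ_s (hrs i) (m + 1)]
    linear_combination (-c * lam i ^ 2 * r i ^ (2 * (m + 1))) * hz2

end aux

/-- the Verma-module operators on `V(λ,ζ)` satisfy the defining relations
(R1)-(R5) of `A_{r,s}(n)`. -/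
theorem stmt7 {K : Type*} [Field K] (n : ℕ)
    (r s lam zeta zeta' : Fin n → K)
    (hr : ∀ i, r i ≠ 0) (hs : ∀ i, s i ≠ 0) (hrs : ∀ i, (r i) ^ 2 ≠ (s i) ^ 2)
    (hlam : ∀ i, lam i ≠ 0)
    (hzeta : ∀ i, zeta i = 1 ∨ zeta i = -1) (hzeta' : ∀ i, zeta' i = 1 ∨ zeta' i = -1) :
    -- (R1)
    (∀ i j : Fin n,
        rhoVOp r lam zeta i ∘ₗ rhoVOp r lam zeta j = rhoVOp r lam zeta j ∘ₗ rhoVOp r lam zeta i ∧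
        rhoVOp (K := K) r lam zeta i ∘ₗ rhoVOp s lam zeta' j
          = rhoVOp s lam zeta' j ∘ₗ rhoVOp r lam zeta i ∧
        rhoVOp (K := K) s lam zeta' i ∘ₗ rhoVOp s lam zeta' j
          = rhoVOp s lam zeta' j ∘ₗ rhoVOp s lam zeta' i) ∧
    (∀ i : Fin n,
        rhoVOp (K := K) r lam zeta i ∘ₗ rhoVInvOp r lam zeta i = LinearMap.id ∧
        rhoVInvOp (K := K) r lam zeta i ∘ₗ rhoVOp r lam zeta i = LinearMap.id ∧
        rhoVOp (K := K) s lam zeta' i ∘ₗ rhoVInvOp s lam zeta' i = LinearMap.id ∧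
        rhoVInvOp (K := K) s lam zeta' i ∘ₗ rhoVOp s lam zeta' i = LinearMap.id) ∧
    -- (R2)
    (∀ i j : Fin n,
        rhoVOp r lam zeta i ∘ₗ xVOp j = (if i = j then r i else 1) • (xVOp j ∘ₗ rhoVOp r lam zeta i) ∧
        rhoVOp r lam zeta i ∘ₗ yVOp r s lam j
          = (if i = j then r i else 1)⁻¹ • (yVOp r s lam j ∘ₗ rhoVOp r lam zeta i)) ∧
    -- (R3)
    (∀ i j : Fin n,
        rhoVOp s lam zeta' i ∘ₗ xVOp j = (if i = j then s i else 1) • (xVOp j ∘ₗ rhoVOp s lam zeta' i) ∧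
        rhoVOp s lam zeta' i ∘ₗ yVOp r s lam j
          = (if i = j then s i else 1)⁻¹ • (yVOp r s lam j ∘ₗ rhoVOp s lam zeta' i)) ∧
    -- (R4)
    (∀ i j : Fin n,
        xVOp (K := K) (n := n) i ∘ₗ xVOp j = xVOp j ∘ₗ xVOp i ∧
        yVOp r s lam i ∘ₗ yVOp r s lam j = yVOp r s lam j ∘ₗ yVOp r s lam i) ∧
    (∀ i j : Fin n, i ≠ j → yVOp r s lam i ∘ₗ xVOp j = xVOp j ∘ₗ yVOp r s lam i) ∧
    -- (R5)
    (∀ i : Fin n,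
        yVOp r s lam i ∘ₗ xVOp i - (r i) ^ 2 • (xVOp i ∘ₗ yVOp r s lam i)
          = rhoVOp s lam zeta' i ∘ₗ rhoVOp s lam zeta' i ∧
        yVOp r s lam i ∘ₗ xVOp i - (s i) ^ 2 • (xVOp i ∘ₗ yVOp r s lam i)
          = rhoVOp r lam zeta i ∘ₗ rhoVOp r lam zeta i) := by
  have hz0 : ∀ i, zeta i ≠ 0 := fun i => by rcases hzeta i with h | h <;> simp [h]
  have hz0' : ∀ i, zeta' i ≠ 0 := fun i => by rcases hzeta' i with h | h <;> simp [h]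
  refine ⟨fun i j => ⟨aux_rho_comm _ _ _ _ _ i j, aux_rho_comm _ _ _ _ _ i j,
      aux_rho_comm _ _ _ _ _ i j⟩,
    fun i => ⟨(aux_rho_inv r lam zeta i (hr i) (hlam i) (hz0 i)).1,
      (aux_rho_inv r lam zeta i (hr i) (hlam i) (hz0 i)).2,
      (aux_rho_inv s lam zeta' i (hs i) (hlam i) (hz0' i)).1,
      (aux_rho_inv s lam zeta' i (hs i) (hlam i) (hz0' i)).2⟩,
    fun i j => ⟨aux_rho_x _ _ _ i j, aux_rho_y r s _ _ _ i j (hr i)⟩,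
    fun i j => ⟨aux_rho_x _ _ _ i j, aux_rho_y r s _ _ _ i j (hs i)⟩,
    fun i j => ⟨aux_xx i j, aux_yy r s lam i j⟩,
    fun i j h => aux_yx r s lam i j h,
    fun i => ⟨aux_R5r r s lam zeta' hrs hzeta' i, aux_R5s r s lam zeta hrs hzeta i⟩⟩
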